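/- Let d ≥ 1 and define f̄ : ℝ^d → ℝ by f̄(x) = (Γ(3 + d/2)/(2π^{d/2}))·(1 − ‖x‖²)² for ‖x‖ < 1 and f̄(x) = 0 otherwise. Then f̄ is differentiable at every point of ℝ^d, and its gradient is globally Lipschitz with constant 6·π^{−d/2}·Γ(3 + d/2): for all x, y ∈ ℝ^d, ‖∇f̄(y) − ∇f̄(x)‖ ≤ 6·π^{−d/2}·Γ(3 + d/2)·‖y − x‖. -/

import Mathlib

open MeasureTheory

noncomputable section

/-- The density `f̄(x) = (Γ(3 + d/2)/(2π^{d/2}))(1 - ‖x‖²)² 𝟙_{‖x‖ < 1}`. -/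
noncomputable def fbar (d : ℕ) (x : EuclideanSpace ℝ (Fin d)) : ℝ :=
  if ‖x‖ < 1 then
    Real.Gamma (3 + (d : ℝ) / 2) / (2 * Real.pi ^ ((d : ℝ) / 2)) * (1 - ‖x‖ ^ 2) ^ 2
  else 0

section aux

lemma q_hasDerivAt (t : ℝ) : HasDerivAt (fun s : ℝ => max s 0 ^ 2) (2 * max t 0) t := by
  rcases lt_trichotomy t 0 with ht | ht | ht
  · have h0 : (2 : ℝ) * max t 0 = 0 := by rw [max_eq_right ht.le]; ring
    rw [h0]
    have : HasDerivAt (fun _ : ℝ => (0 : ℝ)) 0 t := hasDerivAt_const t 0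
    refine this.congr_of_eventuallyEq ?_
    filter_upwards [Iio_mem_nhds ht] with s hs
    rw [max_eq_right (le_of_lt hs)]; ring
  · subst ht
    have h0 : (2 : ℝ) * max 0 0 = 0 := by simp
    rw [h0]
    rw [hasDerivAt_iff_isLittleO]
    rw [Asymptotics.isLittleO_iff]
    intro c hc
    filter_upwards [Metric.ball_mem_nhds (0 : ℝ) hc] with s hs
    simp only [Metric.mem_ball, Real.dist_eq, sub_zero] at hs
    have h1 : max s 0 ≤ |s| := max_le (le_abs_self s) (abs_nonneg s)
    have h2 : (0 : ℝ) ≤ max s 0 := le_max_right s 0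
    have : ‖max s 0 ^ 2 - max 0 0 ^ 2 - (s - 0) • (0 : ℝ)‖ = max s 0 ^ 2 := by
      simp [abs_of_nonneg (pow_nonneg h2 2)]
    rw [this]
    calc max s 0 ^ 2 ≤ |s| * |s| := by nlinarith
      _ ≤ c * ‖s - 0‖ := by
          rw [sub_zero, Real.norm_eq_abs]
          exact mul_le_mul_of_nonneg_right hs.le (abs_nonneg s)
  · have h0 : (2 : ℝ) * max t 0 = 2 * t := by rw [max_eq_left ht.le]
    rw [h0]
    have : HasDerivAt (fun s : ℝ => s ^ 2) (2 * t) t := by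
      simpa using hasDerivAt_pow 2 t
    refine this.congr_of_eventuallyEq ?_
    filter_upwards [Ioi_mem_nhds ht] with s hs
    rw [max_eq_left (le_of_lt hs)]

variable {E : Type*} [NormedAddCommGroup E] [InnerProductSpace ℝ E]

lemma fbar_eq (d : ℕ) : fbar d = fun x : EuclideanSpace ℝ (Fin d) =>
    Real.Gamma (3 + (d : ℝ) / 2) / (2 * Real.pi ^ ((d : ℝ) / 2)) * max (1 - ‖x‖ ^ 2) 0 ^ 2 := by
  funext x
  unfold fbar
  split_ifs with h
  · have hx2 : ‖x‖ ^ 2 < 1 := by nlinarith [norm_nonneg x]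
    rw [max_eq_left (by linarith)]
  · push_neg at h
    have hx2 : (1 : ℝ) ≤ ‖x‖ ^ 2 := by nlinarith [norm_nonneg x]
    rw [max_eq_right (by linarith)]
    ring

lemma fbar_hasGradient (d : ℕ) (x : EuclideanSpace ℝ (Fin d)) :
    HasGradientAt (fbar d)
      ((-(4 * (Real.Gamma (3 + (d : ℝ) / 2) / (2 * Real.pi ^ ((d : ℝ) / 2)))
        * max (1 - ‖x‖ ^ 2) 0)) • x) x := by
  set C := Real.Gamma (3 + (d : ℝ) / 2) / (2 * Real.pi ^ ((d : ℝ) / 2)) with hC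
  rw [hasGradientAt_iff_hasFDerivAt, fbar_eq]
  have h1 : HasFDerivAt (fun y : EuclideanSpace ℝ (Fin d) => 1 - ‖y‖ ^ 2)
      (-(2 • innerSL ℝ x)) x := by
    have := ((hasStrictFDerivAt_norm_sq x).hasFDerivAt.neg).const_add 1
    simpa [sub_eq_add_neg] using this
  have h2 := (q_hasDerivAt (1 - ‖x‖ ^ 2)).comp_hasFDerivAt x h1
  have h3 := h2.const_mul C
  convert h3 using 1
  case e'_11 => rfl
  rotate_left
  ext y
  simp only [ContinuousLinearMap.coe_smul', Pi.smul_apply, ContinuousLinearMap.neg_apply,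
    ContinuousLinearMap.smul_apply, innerSL_apply_apply, smul_eq_mul,
    InnerProductSpace.toDual_apply_apply, real_inner_smul_left]
  ring
  rfl

lemma hmax_le_one (x : E) : max (1 - ‖x‖ ^ 2) 0 ≤ 1 := by
  apply max_le _ zero_le_one
  nlinarith [norm_nonneg x, sq_nonneg (‖x‖)]

lemma hmax_lip (x y : E) (hx : ‖x‖ ≤ 1) :
    |max (1 - ‖y‖ ^ 2) 0 - max (1 - ‖x‖ ^ 2) 0| ≤ 2 * ‖y - x‖ := by
  have hnn := norm_nonneg x
  have hny := norm_nonneg y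
  have hd : |‖y‖ - ‖x‖| ≤ ‖y - x‖ := abs_norm_sub_norm_le y x
  by_cases hy : ‖y‖ ≤ 1
  · have h1 : (0:ℝ) ≤ 1 - ‖y‖ ^ 2 := by nlinarith
    have h2 : (0:ℝ) ≤ 1 - ‖x‖ ^ 2 := by nlinarith
    rw [max_eq_left h1, max_eq_left h2]
    have : (1 - ‖y‖ ^ 2) - (1 - ‖x‖ ^ 2) = (‖x‖ + ‖y‖) * (‖x‖ - ‖y‖) := by ring
    rw [this, abs_mul, abs_of_nonneg (by linarith : (0:ℝ) ≤ ‖x‖ + ‖y‖), abs_sub_comm]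
    calc (‖x‖ + ‖y‖) * |‖y‖ - ‖x‖| ≤ 2 * |‖y‖ - ‖x‖| := by
          apply mul_le_mul_of_nonneg_right (by linarith) (abs_nonneg _)
      _ ≤ 2 * ‖y - x‖ := by linarith
  · push_neg at hy
    have hy2 : (1:ℝ) ≤ ‖y‖ ^ 2 := by nlinarith
    rw [max_eq_right (by linarith : 1 - ‖y‖ ^ 2 ≤ (0:ℝ))]
    have h2 : (0:ℝ) ≤ 1 - ‖x‖ ^ 2 := by nlinarith
    rw [max_eq_left h2]
    rw [abs_of_nonpos (by linarith : (0:ℝ) - (1 - ‖x‖ ^ 2) ≤ 0)]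
    have : ‖y‖ - ‖x‖ ≤ ‖y - x‖ := le_trans (le_abs_self _) hd
    nlinarith

lemma phi_lip_aux (x y : E) (hle : ‖x‖ ≤ ‖y‖) :
    ‖max (1 - ‖y‖ ^ 2) 0 • y - max (1 - ‖x‖ ^ 2) 0 • x‖ ≤ 3 * ‖y - x‖ := by
  by_cases hx : 1 ≤ ‖x‖
  · have hx2 : (1:ℝ) ≤ ‖x‖ ^ 2 := by nlinarith [norm_nonneg x]
    have hy2 : (1:ℝ) ≤ ‖y‖ ^ 2 := by nlinarith [norm_nonneg x]
    rw [max_eq_right (by linarith), max_eq_right (by linarith)]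
    simp
  · push_neg at hx
    have key : max (1 - ‖y‖ ^ 2) 0 • y - max (1 - ‖x‖ ^ 2) 0 • x
        = max (1 - ‖y‖ ^ 2) 0 • (y - x)
          + (max (1 - ‖y‖ ^ 2) 0 - max (1 - ‖x‖ ^ 2) 0) • x := by
      rw [smul_sub, sub_smul]; abel
    rw [key]
    have h1 : ‖max (1 - ‖y‖ ^ 2) 0 • (y - x)‖ ≤ 1 * ‖y - x‖ := by
      rw [norm_smul]
      apply mul_le_mul_of_nonneg_right _ (norm_nonneg _)
      rw [Real.norm_eq_abs, abs_of_nonneg (le_max_right _ _)]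
      exact hmax_le_one y
    have h2 : ‖(max (1 - ‖y‖ ^ 2) 0 - max (1 - ‖x‖ ^ 2) 0) • x‖ ≤ 2 * ‖y - x‖ := by
      rw [norm_smul, Real.norm_eq_abs]
      calc |max (1 - ‖y‖ ^ 2) 0 - max (1 - ‖x‖ ^ 2) 0| * ‖x‖
          ≤ (2 * ‖y - x‖) * 1 :=
            mul_le_mul (hmax_lip x y hx.le) hx.le (norm_nonneg _)
              (by positivity)
        _ = 2 * ‖y - x‖ := by ring
    calc ‖_ + _‖ ≤ ‖max (1 - ‖y‖ ^ 2) 0 • (y - x)‖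
          + ‖(max (1 - ‖y‖ ^ 2) 0 - max (1 - ‖x‖ ^ 2) 0) • x‖ := norm_add_le _ _
      _ ≤ 1 * ‖y - x‖ + 2 * ‖y - x‖ := add_le_add h1 h2
      _ = 3 * ‖y - x‖ := by ring

lemma phi_lip (x y : E) :
    ‖max (1 - ‖y‖ ^ 2) 0 • y - max (1 - ‖x‖ ^ 2) 0 • x‖ ≤ 3 * ‖y - x‖ := by
  rcases le_total ‖x‖ ‖y‖ with h | h
  · exact phi_lip_aux x y h
  · rw [norm_sub_rev, show ‖y - x‖ = ‖x - y‖ from norm_sub_rev y x]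
    exact phi_lip_aux y x h

end aux

theorem stmt11 (d : ℕ) (hd : 1 ≤ d) :
    Differentiable ℝ (fbar d) ∧
    ∀ x y : EuclideanSpace ℝ (Fin d),
      ‖gradient (fbar d) y - gradient (fbar d) x‖ ≤
        6 * Real.pi ^ (-(d : ℝ) / 2) * Real.Gamma (3 + (d : ℝ) / 2) * ‖y - x‖ := by
  set C := Real.Gamma (3 + (d : ℝ) / 2) / (2 * Real.pi ^ ((d : ℝ) / 2)) with hC
  have hpi : (0:ℝ) < Real.pi ^ ((d : ℝ) / 2) := Real.rpow_pos_of_pos Real.pi_pos _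
  have hGamma : (0:ℝ) < Real.Gamma (3 + (d : ℝ) / 2) :=
    Real.Gamma_pos_of_pos (by positivity)
  have hCpos : (0:ℝ) < C := by rw [hC]; positivity
  constructor
  · intro x
    exact (fbar_hasGradient d x).differentiableAt
  · intro x y
    rw [(fbar_hasGradient d x).gradient, (fbar_hasGradient d y).gradient]
    have key : (-(4 * C * max (1 - ‖y‖ ^ 2) 0)) • y - (-(4 * C * max (1 - ‖x‖ ^ 2) 0)) • x
        = (-(4 * C)) • (max (1 - ‖y‖ ^ 2) 0 • y - max (1 - ‖x‖ ^ 2) 0 • x) := by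
      rw [smul_sub, smul_smul, smul_smul]; ring_nf
    rw [key, norm_smul, Real.norm_eq_abs, abs_neg, abs_of_nonneg (by positivity : (0:ℝ) ≤ 4 * C)]
    have hconst : 6 * Real.pi ^ (-(d : ℝ) / 2) * Real.Gamma (3 + (d : ℝ) / 2) = 4 * C * 3 := by
      rw [hC]
      rw [show (-(d : ℝ) / 2) = -((d : ℝ) / 2) by ring, Real.rpow_neg Real.pi_pos.le]
      field_simp
      ring
    rw [hconst]
    calc 4 * C * ‖max (1 - ‖y‖ ^ 2) 0 • y - max (1 - ‖x‖ ^ 2) 0 • x‖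
        ≤ 4 * C * (3 * ‖y - x‖) := by
          exact mul_le_mul_of_nonneg_left (phi_lip x y) (by positivity)
      _ = 4 * C * 3 * ‖y - x‖ := by ring
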